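/- arXiv:2404.03672 — 5 statements merged into one kernel-verified Lean document; each statement's English description precedes it below -/
import Mathlib

section
/- For all x ∈ ℝ, (x/2)(F(x) - 1) + F'(x) > 0. -/
noncomputable def F (ξ : ℝ) : ℝ :=
  (1 / Real.sqrt Real.pi) * ∫ s in (0:ℝ)..ξ, Real.exp (-s ^ 2 / 4)

noncomputable def F' (x : ℝ) : ℝ := (1 / Real.sqrt Real.pi) * Real.exp (-x ^ 2 / 4)

open Real MeasureTheory Set Filter

lemma gfun_eq : (fun s : ℝ => Real.exp (-s ^ 2 / 4)) = fun s => Real.exp (-(1/4) * s ^ 2) := by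
  funext s; ring_nf

lemma g_integrable : Integrable (fun s : ℝ => Real.exp (-s ^ 2 / 4)) := by
  rw [gfun_eq]; exact integrable_exp_neg_mul_sq (by norm_num)

lemma sg_integrable : Integrable (fun s : ℝ => s * Real.exp (-s ^ 2 / 4)) := by
  have := integrable_mul_exp_neg_mul_sq (b := 1/4) (by norm_num)
  convert this using 2 with s
  ring_nf

lemma tail_mul (x : ℝ) :
    ∫ s in Ioi x, s * Real.exp (-s ^ 2 / 4) = 2 * Real.exp (-x ^ 2 / 4) := by
  have hderiv : ∀ s ∈ Ici x, HasDerivAt (fun s : ℝ => -2 * Real.exp (-s ^ 2 / 4))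
      (s * Real.exp (-s ^ 2 / 4)) s := by
    intro s _
    have h1 : HasDerivAt (fun s : ℝ => -s ^ 2 / 4) (-s / 2) s := by
      have := ((hasDerivAt_pow 2 s).neg).div_const 4
      refine this.congr_deriv ?_
      ring_nf
    have h2 := (h1.exp).const_mul (-2 : ℝ)
    refine h2.congr_deriv ?_
    ring
  have hlim : Tendsto (fun s : ℝ => -2 * Real.exp (-s ^ 2 / 4)) atTop (nhds 0) := by
    have : Tendsto (fun s : ℝ => -s ^ 2 / 4) atTop atBot := by
      apply Tendsto.atBot_div_const (by norm_num)
      rw [tendsto_neg_atBot_iff]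
      exact tendsto_pow_atTop (by norm_num)
    have := (Real.tendsto_exp_atBot.comp this).const_mul (-2 : ℝ)
    simpa using this
  have := integral_Ioi_of_hasDerivAt_of_tendsto' hderiv
    (sg_integrable.integrableOn) hlim
  rw [this]; ring

lemma tail_lt {x : ℝ} (hx : 0 < x) :
    ∫ s in Ioi x, Real.exp (-s ^ 2 / 4) < (2 / x) * Real.exp (-x ^ 2 / 4) := by
  have key : 0 < ∫ s in Ioi x, (s / x - 1) * Real.exp (-s ^ 2 / 4) := by
    rw [setIntegral_pos_iff_support_of_nonneg_ae]
    · have : Ioi x ⊆ Function.support (fun s : ℝ => (s / x - 1) * Real.exp (-s ^ 2 / 4)) := by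
        intro s hs
        have h1 : 0 < s / x - 1 := by
          rw [sub_pos, lt_div_iff₀ hx]; simpa using hs
        exact ne_of_gt (mul_pos h1 (Real.exp_pos _))
      have h0 : (0 : ENNReal) < volume (Ioi x) := by
        rw [Real.volume_Ioi]; exact ENNReal.zero_lt_top
      exact lt_of_lt_of_le h0 (measure_mono (Set.subset_inter this (subset_refl _)))
    · filter_upwards [ae_restrict_mem measurableSet_Ioi] with s hs
      have h1 : (0:ℝ) ≤ s / x - 1 := by
        rw [sub_nonneg, le_div_iff₀ hx]; simpa using (le_of_lt hs)
      exact mul_nonneg h1 (Real.exp_pos _).le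
    · apply Integrable.integrableOn
      have : (fun s : ℝ => (s / x - 1) * Real.exp (-s ^ 2 / 4))
          = fun s => (1/x) * (s * Real.exp (-s ^ 2 / 4)) - Real.exp (-s ^ 2 / 4) := by
        funext s; field_simp
      rw [this]
      exact ((sg_integrable.const_mul _).sub g_integrable)
  have heq : ∫ s in Ioi x, (s / x - 1) * Real.exp (-s ^ 2 / 4)
      = (1/x) * (∫ s in Ioi x, s * Real.exp (-s ^ 2 / 4))
        - ∫ s in Ioi x, Real.exp (-s ^ 2 / 4) := by
    have h := integral_sub (μ := volume.restrict (Ioi x))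
      (f := fun s : ℝ => (1/x) * (s * Real.exp (-s ^ 2 / 4)))
      (g := fun s : ℝ => Real.exp (-s ^ 2 / 4))
      ((sg_integrable.const_mul _).integrableOn) (g_integrable.integrableOn)
    rw [integral_const_mul] at h
    beta_reduce at h
    rw [← h]
    congr 1; funext s; field_simp
  rw [heq, tail_mul] at key
  have hr : (1/x) * (2 * Real.exp (-x ^ 2 / 4)) = 2 / x * Real.exp (-x ^ 2 / 4) := by ring
  linarith [key]

lemma half_gaussian : ∫ s in Ioi (0:ℝ), Real.exp (-s ^ 2 / 4) = Real.sqrt Real.pi := by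
  rw [gfun_eq, integral_gaussian_Ioi]
  rw [show Real.pi / (1/4) = 4 * Real.pi by ring]
  rw [show (4:ℝ) * Real.pi = 2^2 * Real.pi by norm_num]
  rw [Real.sqrt_mul (by positivity), Real.sqrt_sq (by norm_num)]
  ring

lemma F_split {x : ℝ} (hx : 0 ≤ x) :
    F x = 1 - (1 / Real.sqrt Real.pi) * ∫ s in Ioi x, Real.exp (-s ^ 2 / 4) := by
  have hπ : (0:ℝ) < Real.sqrt Real.pi := Real.sqrt_pos.mpr Real.pi_pos
  have hsplit : (∫ s in (0:ℝ)..x, Real.exp (-s ^ 2 / 4))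
      + ∫ s in Ioi x, Real.exp (-s ^ 2 / 4) = Real.sqrt Real.pi := by
    rw [intervalIntegral.integral_of_le hx, ← half_gaussian,
      ← Ioc_union_Ioi_eq_Ioi hx]
    rw [setIntegral_union (Ioc_disjoint_Ioi le_rfl) measurableSet_Ioi
      g_integrable.integrableOn g_integrable.integrableOn]
  unfold F
  have : (∫ s in (0:ℝ)..x, Real.exp (-s ^ 2 / 4))
      = Real.sqrt Real.pi - ∫ s in Ioi x, Real.exp (-s ^ 2 / 4) := by linarith
  rw [this]
  field_simp

theorem pos_combination' (x : ℝ) : 0 < x / 2 * (F x - 1) + F' x := by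
  have hπ : (0:ℝ) < Real.sqrt Real.pi := Real.sqrt_pos.mpr Real.pi_pos
  have hF' : 0 < F' x := mul_pos (by positivity) (Real.exp_pos _)
  rcases le_or_gt x 0 with hx | hx
  · have hFle : F x ≤ 0 := by
      unfold F
      have : (∫ s in (0:ℝ)..x, Real.exp (-s ^ 2 / 4)) ≤ 0 := by
        rw [← neg_nonneg, ← intervalIntegral.integral_symm]
        apply intervalIntegral.integral_nonneg hx
        intro s _; exact (Real.exp_pos _).le
      exact mul_nonpos_of_nonneg_of_nonpos (by positivity) this
    nlinarith [mul_nonneg (by linarith : (0:ℝ) ≤ -(x/2)) (by linarith : (0:ℝ) ≤ 1 - F x)]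
  · rw [F_split hx.le]
    have htail := tail_lt hx
    unfold F'
    have h2 : x / 2 * ((1 / Real.sqrt Real.pi) * ∫ s in Ioi x, Real.exp (-s ^ 2 / 4))
        < x / 2 * ((1 / Real.sqrt Real.pi) * ((2 / x) * Real.exp (-x ^ 2 / 4))) := by
      apply mul_lt_mul_of_pos_left _ (by linarith)
      exact mul_lt_mul_of_pos_left htail (by positivity)
    have h3 : x / 2 * ((1 / Real.sqrt Real.pi) * ((2 / x) * Real.exp (-x ^ 2 / 4)))
        = (1 / Real.sqrt Real.pi) * Real.exp (-x ^ 2 / 4) := by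
      field_simp
    nlinarith [h2, h3]
end

section
/- The function P(x, y) = -ln(F(x) - F(y)) is strictly convex on the open half-plane {(x, y) ∈ ℝ² : x > y}; equivalently, its Hessian matrix D²P(x, y) is positive definite at every point with x > y. -/
open Real intervalIntegral Set Filter

noncomputable def ρ (s : ℝ) : ℝ := Real.exp (-s ^ 2 / 4)

lemma ρ_pos (s : ℝ) : 0 < ρ s := Real.exp_pos _

lemma ρ_cont : Continuous ρ := by unfold ρ; fun_prop

lemma ρ_hasDerivAt (s : ℝ) : HasDerivAt ρ (-(s / 2) * ρ s) s := by
  have h : HasDerivAt (fun s : ℝ => -s ^ 2 / 4) (-(s / 2)) s := by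
    have := ((hasDerivAt_pow 2 s).neg).div_const 4
    refine this.congr_deriv ?_
    ring
  have := h.exp
  refine this.congr_deriv ?_
  unfold ρ; ring

lemma ρ_intble (a b : ℝ) : IntervalIntegrable ρ MeasureTheory.volume a b :=
  ρ_cont.intervalIntegrable a b

lemma hasDerivAt_F (ξ : ℝ) :
    HasDerivAt F (1 / Real.sqrt Real.pi * ρ ξ) ξ := by
  have h : HasDerivAt (fun u => ∫ s in (0:ℝ)..u, ρ s) (ρ ξ) ξ :=
    integral_hasDerivAt_right (ρ_intble 0 ξ)
      (ρ_cont.stronglyMeasurable.stronglyMeasurableAtFilter) ρ_cont.continuousAt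
  exact h.const_mul _

lemma F_sub (x y : ℝ) :
    F x - F y = 1 / Real.sqrt Real.pi * ∫ s in y..x, ρ s := by
  unfold F
  rw [← mul_sub]
  congr 1
  show (∫ s in (0:ℝ)..x, ρ s) - ∫ s in (0:ℝ)..y, ρ s = _
  rw [integral_interval_sub_left (ρ_intble 0 x) (ρ_intble 0 y)]

lemma integral_ρ_pos {y x : ℝ} (h : y < x) : 0 < ∫ s in y..x, ρ s :=
  intervalIntegral_pos_of_pos_on (ρ_intble y x) (fun s _ => ρ_pos s) h

lemma F_sub_pos {y x : ℝ} (h : y < x) : 0 < F x - F y := by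
  rw [F_sub]
  have h1 := integral_ρ_pos h
  have h2 : 0 < Real.sqrt Real.pi := Real.sqrt_pos.2 Real.pi_pos
  positivity

lemma halfρ_intble (y x : ℝ) :
    IntervalIntegrable (fun s => s / 2 * ρ s) MeasureTheory.volume y x := by
  apply Continuous.intervalIntegrable
  exact (continuous_id.div_const 2).mul ρ_cont

lemma integral_half (y x : ℝ) : ∫ s in y..x, s / 2 * ρ s = ρ y - ρ x := by
  have h : ∀ s ∈ Set.uIcc y x, HasDerivAt (fun s => -ρ s) (s / 2 * ρ s) s := by
    intro s _
    have := (ρ_hasDerivAt s).neg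
    refine this.congr_deriv ?_
    ring
  rw [intervalIntegral.integral_eq_sub_of_hasDerivAt h
    (halfρ_intble y x)]
  ring

lemma integral_sρ (y x : ℝ) : ∫ s in y..x, s * ρ s = 2 * (ρ y - ρ x) := by
  have h1 : ∀ s, s * ρ s = 2 * (s / 2 * ρ s) := fun s => by ring
  calc ∫ s in y..x, s * ρ s = ∫ s in y..x, 2 * (s / 2 * ρ s) := by simp_rw [← h1]
    _ = 2 * ∫ s in y..x, s / 2 * ρ s := intervalIntegral.integral_const_mul _ _
    _ = 2 * (ρ y - ρ x) := by rw [integral_half]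

lemma sρ_intble (y x : ℝ) : IntervalIntegrable (fun s => s * ρ s) MeasureTheory.volume y x :=
  (continuous_id.mul ρ_cont).intervalIntegrable y x

lemma P_pos {y x : ℝ} (h : y < x) : 0 < x / 2 * (∫ s in y..x, ρ s) + ρ x := by
  have h1 : 0 ≤ ∫ s in y..x, (x - s) / 2 * ρ s :=
    intervalIntegral.integral_nonneg h.le (fun s hs =>
      mul_nonneg (by linarith [hs.2]) (ρ_pos s).le)
  have h2 : ∫ s in y..x, (x - s) / 2 * ρ s
      = x / 2 * (∫ s in y..x, ρ s) - (ρ y - ρ x) := by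
    have e : (fun s => (x - s) / 2 * ρ s) = fun s => x / 2 * ρ s - s / 2 * ρ s := by
      ext s; ring
    rw [e, intervalIntegral.integral_sub (f := fun s => x / 2 * ρ s) (g := fun s => s / 2 * ρ s)
        ((continuous_const.mul ρ_cont).intervalIntegrable y x)
        (halfρ_intble y x),
      intervalIntegral.integral_const_mul, integral_half]
  have hy := ρ_pos y
  linarith [h1, h2]

lemma Q_pos {y x : ℝ} (h : y < x) : 0 < ρ y - y / 2 * (∫ s in y..x, ρ s) := by
  have h1 : 0 ≤ ∫ s in y..x, (s - y) / 2 * ρ s :=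
    intervalIntegral.integral_nonneg h.le (fun s hs =>
      mul_nonneg (by linarith [hs.1]) (ρ_pos s).le)
  have h2 : ∫ s in y..x, (s - y) / 2 * ρ s
      = (ρ y - ρ x) - y / 2 * (∫ s in y..x, ρ s) := by
    have e : (fun s => (s - y) / 2 * ρ s) = fun s => s / 2 * ρ s - y / 2 * ρ s := by
      ext s; ring
    rw [e, intervalIntegral.integral_sub (f := fun s => s / 2 * ρ s) (g := fun s => y / 2 * ρ s)
        (halfρ_intble y x)
        ((continuous_const.mul ρ_cont).intervalIntegrable y x),
      intervalIntegral.integral_const_mul, integral_half]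
  have hx := ρ_pos x
  linarith [h1, h2]

lemma E_pos {y x : ℝ} (h : y < x) :
    0 < 2 * x * ρ y - 2 * y * ρ x - x * y * (∫ s in y..x, ρ s) := by
  have hIsub : ∀ w : ℝ, ∫ s in y..x, (s - w) * ρ s
      = 2 * (ρ y - ρ x) - w * (∫ s in y..x, ρ s) := by
    intro w
    have e : (fun s => (s - w) * ρ s) = fun s => s * ρ s - w * ρ s := by ext s; ring
    rw [e, intervalIntegral.integral_sub (f := fun s => s * ρ s) (g := fun s => w * ρ s) (sρ_intble y x)
        ((continuous_const.mul ρ_cont).intervalIntegrable y x),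
      intervalIntegral.integral_const_mul, integral_sρ]
  rcases le_or_gt 0 x with hx | hx
  · have h1 : 0 ≤ ∫ s in y..x, (s - y) * ρ s :=
      intervalIntegral.integral_nonneg h.le (fun s hs =>
        mul_nonneg (by linarith [hs.1]) (ρ_pos s).le)
    rw [hIsub y] at h1
    have hρx := ρ_pos x
    nlinarith [mul_nonneg hx h1]
  · have h1 : 0 ≤ ∫ s in y..x, (x - s) * ρ s :=
      intervalIntegral.integral_nonneg h.le (fun s hs =>
        mul_nonneg (by linarith [hs.2]) (ρ_pos s).le)
    have h2 : ∫ s in y..x, (x - s) * ρ s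
        = x * (∫ s in y..x, ρ s) - 2 * (ρ y - ρ x) := by
      have e : (fun s => (x - s) * ρ s) = fun s => x * ρ s - s * ρ s := by ext s; ring
      rw [e, intervalIntegral.integral_sub (f := fun s => x * ρ s) (g := fun s => s * ρ s)
          ((continuous_const.mul ρ_cont).intervalIntegrable y x) (sρ_intble y x),
        intervalIntegral.integral_const_mul, integral_sρ]
    rw [h2] at h1
    have hρy := ρ_pos y
    have hy : y < 0 := lt_trans h hx
    nlinarith [mul_nonneg (by linarith : (0:ℝ) ≤ -y) h1]

lemma key {y x : ℝ} (h : y < x) (u v : ℝ) (huv : u ≠ 0 ∨ v ≠ 0) :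
    (∫ s in y..x, ρ s) * (u ^ 2 * (-(x / 2) * ρ x) - v ^ 2 * (-(y / 2) * ρ y))
      < (u * ρ x - v * ρ y) ^ 2 := by
  set I := ∫ s in y..x, ρ s with hI
  have hIpos : 0 < I := integral_ρ_pos h
  have hP : 0 < x / 2 * I + ρ x := P_pos h
  have hQ : 0 < ρ y - y / 2 * I := Q_pos h
  have hE : 0 < 2 * x * ρ y - 2 * y * ρ x - x * y * I := E_pos h
  have hx := ρ_pos x
  have hy := ρ_pos y
  set A := ρ x * (x / 2 * I + ρ x) with hA'
  set B := ρ y * (ρ y - y / 2 * I) with hB'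
  have hA : 0 < A := mul_pos hx hP
  have hB : 0 < B := mul_pos hy hQ
  have hdet : (ρ x * ρ y) ^ 2 < A * B := by
    have e : A * B - (ρ x * ρ y) ^ 2
        = ρ x * ρ y * (I / 4) * (2 * x * ρ y - 2 * y * ρ x - x * y * I) := by
      rw [hA', hB']; ring
    nlinarith [mul_pos (mul_pos (mul_pos hx hy) (by linarith : (0:ℝ) < I / 4)) hE]
  have egoal : (u * ρ x - v * ρ y) ^ 2
      - I * (u ^ 2 * (-(x / 2) * ρ x) - v ^ 2 * (-(y / 2) * ρ y))
      = A * u ^ 2 - 2 * (ρ x * ρ y) * u * v + B * v ^ 2 := by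
    rw [hA', hB']; ring
  rcases eq_or_ne v 0 with rfl | hv
  · have hu : u ≠ 0 := huv.resolve_right (by simp)
    have hu2 : 0 < u ^ 2 := lt_of_le_of_ne (sq_nonneg u) (Ne.symm (pow_ne_zero 2 hu))
    nlinarith [mul_pos hA hu2]
  · have hv2 : 0 < v ^ 2 := lt_of_le_of_ne (sq_nonneg v) (Ne.symm (pow_ne_zero 2 hv))
    nlinarith [sq_nonneg (A * u - ρ x * ρ y * v), mul_pos (sub_pos.2 hdet) hv2, hA]

lemma seg {x₁ y₁ x₂ y₂ : ℝ} (h₁ : y₁ < x₁) (h₂ : y₂ < x₂)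
    (huv : x₂ - x₁ ≠ 0 ∨ y₂ - y₁ ≠ 0) {a b : ℝ} (ha : 0 < a) (hb : 0 < b)
    (hab : a + b = 1) :
    -Real.log (F (a * x₁ + b * x₂) - F (a * y₁ + b * y₂)) <
      a * -Real.log (F x₁ - F y₁) + b * -Real.log (F x₂ - F y₂) := by
  set c : ℝ := 1 / Real.sqrt Real.pi with hc'
  have hc : 0 < c := by
    rw [hc']
    have := Real.sqrt_pos.2 Real.pi_pos
    positivity
  set u : ℝ := x₂ - x₁ with hu
  set v : ℝ := y₂ - y₁ with hv
  set α : ℝ → ℝ := fun t => x₁ + t * u with hα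
  set β : ℝ → ℝ := fun t => y₁ + t * v with hβ
  set g : ℝ → ℝ := fun t => F (α t) - F (β t) with hg
  set φ : ℝ → ℝ := fun t => -Real.log (g t) with hφ
  set g₁ : ℝ → ℝ := fun t => c * (u * ρ (α t) - v * ρ (β t)) with hg₁
  set g₂ : ℝ → ℝ :=
    fun t => c * (u ^ 2 * (-(α t / 2) * ρ (α t)) - v ^ 2 * (-(β t / 2) * ρ (β t))) with hg₂
  have hd : ∀ t ∈ Icc (0:ℝ) 1, β t < α t := by
    intro t ht
    simp only [hα, hβ, hu, hv]
    have hm : 0 < min (x₁ - y₁) (x₂ - y₂) := lt_min (by linarith) (by linarith)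
    nlinarith [mul_nonneg (sub_nonneg.2 ht.2)
        (sub_nonneg.2 (min_le_left (x₁ - y₁) (x₂ - y₂))),
      mul_nonneg ht.1 (sub_nonneg.2 (min_le_right (x₁ - y₁) (x₂ - y₂))), hm]
  have hgpos : ∀ t ∈ Icc (0:ℝ) 1, 0 < g t := fun t ht => F_sub_pos (hd t ht)
  have hαd : ∀ t : ℝ, HasDerivAt α u t := by
    intro t
    simpa [hα] using ((hasDerivAt_id t).mul_const u).const_add x₁
  have hβd : ∀ t : ℝ, HasDerivAt β v t := by
    intro t
    simpa [hβ] using ((hasDerivAt_id t).mul_const v).const_add y₁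
  have hgd : ∀ t : ℝ, HasDerivAt g (g₁ t) t := by
    intro t
    have h1 := (hasDerivAt_F (α t)).comp t (hαd t)
    have h2 := (hasDerivAt_F (β t)).comp t (hβd t)
    have := h1.sub h2
    refine this.congr_deriv ?_
    rw [hg₁, hc']
    ring
  have hg1d : ∀ t : ℝ, HasDerivAt g₁ (g₂ t) t := by
    intro t
    have h1 := ((ρ_hasDerivAt (α t)).comp t (hαd t)).const_mul u
    have h2 := ((ρ_hasDerivAt (β t)).comp t (hβd t)).const_mul v
    have := (h1.sub h2).const_mul c
    refine this.congr_deriv ?_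
    rw [hg₂]
    ring
  have hgcont : Continuous g := by
    have : Differentiable ℝ g := fun t => (hgd t).differentiableAt
    exact this.continuous
  have hopen : IsOpen {t : ℝ | 0 < g t} := isOpen_lt continuous_const hgcont
  have hφd : ∀ t : ℝ, 0 < g t → HasDerivAt φ (-(g₁ t / g t)) t := by
    intro t ht
    have := ((Real.hasDerivAt_log ht.ne').comp t (hgd t)).neg
    refine this.congr_deriv ?_
    field_simp
  have hcont : ContinuousOn φ (Icc 0 1) :=
    ((hgcont.continuousOn).log (fun t ht => (hgpos t ht).ne')).neg
  have h2d : ∀ t ∈ interior (Icc (0:ℝ) 1), 0 < deriv^[2] φ t := by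
    rw [interior_Icc]
    intro t ht
    have htI : t ∈ Icc (0:ℝ) 1 := Ioo_subset_Icc_self ht
    have hgt : 0 < g t := hgpos t htI
    have hev : deriv φ =ᶠ[nhds t] fun s => -(g₁ s / g s) := by
      filter_upwards [hopen.mem_nhds hgt] with s hs
      exact (hφd s hs).deriv
    have hd2 : HasDerivAt (fun s => -(g₁ s / g s))
        (-((g₂ t * g t - g₁ t * g₁ t) / (g t) ^ 2)) t :=
      ((hg1d t).div (hgd t) hgt.ne').neg
    have heq : deriv^[2] φ t = -((g₂ t * g t - g₁ t * g₁ t) / (g t) ^ 2) := by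
      show deriv (deriv φ) t = _
      rw [hev.deriv_eq]
      exact hd2.deriv
    rw [heq]
    have hk := key (hd t htI) u v huv
    have hgI : g t = c * ∫ s in β t..α t, ρ s := F_sub _ _
    have hnum : g₂ t * g t - g₁ t * g₁ t < 0 := by
      rw [hgI, hg₁, hg₂]
      nlinarith [mul_lt_mul_of_pos_left hk (mul_pos hc hc)]
    have hden : 0 < (g t) ^ 2 := by positivity
    have := div_neg_of_neg_of_pos hnum hden
    linarith
  have hconv : StrictConvexOn ℝ (Icc (0:ℝ) 1) φ :=
    strictConvexOn_of_deriv2_pos (convex_Icc 0 1) hcont h2d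
  have h01 : (0:ℝ) ∈ Icc (0:ℝ) 1 := left_mem_Icc.2 zero_le_one
  have h11 : (1:ℝ) ∈ Icc (0:ℝ) 1 := right_mem_Icc.2 zero_le_one
  have hmain := hconv.2 h01 h11 (by norm_num) ha hb hab
  simp only [smul_eq_mul, mul_zero, mul_one, zero_add] at hmain
  have e0 : φ 0 = -Real.log (F x₁ - F y₁) := by
    simp only [hφ, hg, hα, hβ]
    norm_num
  have e1 : φ 1 = -Real.log (F x₂ - F y₂) := by
    simp only [hφ, hg, hα, hβ, hu, hv]
    norm_num
  have eb : φ b = -Real.log (F (a * x₁ + b * x₂) - F (a * y₁ + b * y₂)) := by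
    simp only [hφ, hg, hα, hβ, hu, hv]
    have ex : x₁ + b * (x₂ - x₁) = a * x₁ + b * x₂ := by linear_combination (-x₁) * hab
    have ey : y₁ + b * (y₂ - y₁) = a * y₁ + b * y₂ := by linear_combination (-y₁) * hab
    rw [ex, ey]
  rw [e0, e1, eb] at hmain
  exact hmain

theorem strictConvexOn_P :
    StrictConvexOn ℝ {p : ℝ × ℝ | p.2 < p.1}
      (fun p : ℝ × ℝ => -Real.log (F p.1 - F p.2)) := by
  constructor
  · intro p hp q hq a b ha hb hab
    simp only [Set.mem_setOf_eq] at *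
    simp only [Prod.fst_add, Prod.snd_add, Prod.smul_fst, Prod.smul_snd, smul_eq_mul]
    rcases ha.eq_or_lt with h | h
    · have hb1 : b = 1 := by linarith
      rw [← h, hb1]
      simpa using hq
    · nlinarith [mul_lt_mul_of_pos_left hp h, mul_le_mul_of_nonneg_left hq.le hb]
  · intro p hp q hq hpq a b ha hb hab
    simp only [Set.mem_setOf_eq] at hp hq
    have huv : q.1 - p.1 ≠ 0 ∨ q.2 - p.2 ≠ 0 := by
      by_contra hcon
      push_neg at hcon
      exact hpq (Prod.ext (by linarith [hcon.1]) (by linarith [hcon.2]))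
    have := seg hp hq huv ha hb hab
    simp only [Prod.fst_add, Prod.snd_add, Prod.smul_fst, Prod.smul_snd, smul_eq_mul]
    convert this using 2
end

section
/- The matrix Q = (F(x) - F(y))² · D²P(x, y), where P(x,y) = -ln(F(x) - F(y)), decomposes as Q = R₁ + F'(x)F'(y)R₂, where R₁ is the diagonal matrix with diagonal entries F'(x)(F(x)-F(y))(x-z)/2 and F'(y)(F(x)-F(y))(z-y)/2 for some z ∈ (y,x), and R₂ is the matrix [[1,-1],[-1,1]]. -/
/-- `P x y = -ln (F x - F y)`. -/
noncomputable def P (x y : ℝ) : ℝ := -Real.log (F x - F y)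

/-- The rescaled Hessian matrix `Q = (F x - F y)^2 • D²P(x,y)`. -/
noncomputable def Q (x y : ℝ) : Matrix (Fin 2) (Fin 2) ℝ :=
  (F x - F y) ^ 2 •
    !![deriv (fun s => deriv (fun t => P t y) s) x,
       deriv (fun s => deriv (fun t => P t s) x) y;
       deriv (fun s => deriv (fun t => P t s) x) y,
       deriv (fun s => deriv (fun t => P x t) s) y]

lemma F'_pos (x : ℝ) : 0 < F' x := by
  unfold F'
  have := Real.pi_pos
  positivity

lemma hasDerivAt_F_s7 (x : ℝ) : HasDerivAt F (F' x) x := by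
  have hc : Continuous fun s : ℝ => Real.exp (-s ^ 2 / 4) := by continuity
  have h := ((hc.integral_hasStrictDerivAt 0 x).hasDerivAt).const_mul
    (1 / Real.sqrt Real.pi)
  unfold F F'
  simpa [mul_comm] using h

lemma hasDerivAt_F' (x : ℝ) : HasDerivAt F' (-x / 2 * F' x) x := by
  have h1 : HasDerivAt (fun t : ℝ => -t ^ 2 / 4) (-x / 2) x := by
    have := ((hasDerivAt_pow 2 x).neg.div_const 4)
    convert this using 1 <;> first | rfl | (norm_num; ring)
  have h2 := (h1.exp).const_mul (1 / Real.sqrt Real.pi)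
  unfold F'
  convert h2 using 1 <;> first | rfl | ring

lemma F_strictMono : StrictMono F :=
  strictMono_of_deriv_pos fun x => by
    rw [(hasDerivAt_F_s7 x).deriv]; exact F'_pos x

lemma Pxx (x y : ℝ) (h : y < x) :
    deriv (fun s => deriv (fun t => P t y) s) x
      = -(((-x / 2 * F' x) * (F x - F y) - F' x * F' x) / (F x - F y) ^ 2) := by
  have hev : (fun s => deriv (fun t => P t y) s)
      =ᶠ[nhds x] fun s => -(F' s / (F s - F y)) := by
    filter_upwards [Ioi_mem_nhds h] with s hs
    have hpos : 0 < F s - F y := sub_pos.2 (F_strictMono hs)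
    have hd : HasDerivAt (fun t => P t y) (-(F' s / (F s - F y))) s := by
      have := (((hasDerivAt_F_s7 s).sub_const (F y)).log hpos.ne').neg
      simpa [P, Pi.neg_def] using this
    exact hd.deriv
  rw [hev.deriv_eq]
  have hpos : 0 < F x - F y := sub_pos.2 (F_strictMono h)
  exact ((((hasDerivAt_F' x).div ((hasDerivAt_F_s7 x).sub_const (F y))
    hpos.ne')).neg).deriv

lemma Pxy (x y : ℝ) (h : y < x) :
    deriv (fun s => deriv (fun t => P t s) x) y
      = -((0 * (F x - F y) - F' x * (0 - F' y)) / (F x - F y) ^ 2) := by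
  have hev : (fun s => deriv (fun t => P t s) x)
      =ᶠ[nhds y] fun s => -(F' x / (F x - F s)) := by
    filter_upwards [Iio_mem_nhds h] with s hs
    have hpos : 0 < F x - F s := sub_pos.2 (F_strictMono hs)
    have hd : HasDerivAt (fun t => P t s) (-(F' x / (F x - F s))) x := by
      have := (((hasDerivAt_F_s7 x).sub_const (F s)).log hpos.ne').neg
      simpa [P, Pi.neg_def] using this
    exact hd.deriv
  rw [hev.deriv_eq]
  have hpos : 0 < F x - F y := sub_pos.2 (F_strictMono h)
  exact (((hasDerivAt_const y (F' x)).div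
    ((hasDerivAt_const y (F x)).sub (hasDerivAt_F_s7 y)) hpos.ne').neg).deriv

lemma Pyy (x y : ℝ) (h : y < x) :
    deriv (fun s => deriv (fun t => P x t) s) y
      = ((-y / 2 * F' y) * (F x - F y) - F' y * (0 - F' y)) / (F x - F y) ^ 2 := by
  have hev : (fun s => deriv (fun t => P x t) s)
      =ᶠ[nhds y] fun s => F' s / (F x - F s) := by
    filter_upwards [Iio_mem_nhds h] with s hs
    have hpos : 0 < F x - F s := sub_pos.2 (F_strictMono hs)
    have hd : HasDerivAt (fun t => P x t) (F' s / (F x - F s)) s := by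
      have := ((((hasDerivAt_const s (F x)).sub (hasDerivAt_F_s7 s)).log
        hpos.ne').neg)
      have h2 : -(-F' s / (F x - F s)) = F' s / (F x - F s) := by ring
      simpa [P, h2, Pi.neg_def] using this
    exact hd.deriv
  rw [hev.deriv_eq]
  have hpos : 0 < F x - F y := sub_pos.2 (F_strictMono h)
  exact ((hasDerivAt_F' y).div
    ((hasDerivAt_const y (F x)).sub (hasDerivAt_F_s7 y)) hpos.ne').deriv

theorem Q_decomposition (x y : ℝ) (h : y < x) :
    ∃ z ∈ Set.Ioo y x,
      (F' x - F' y) / (F x - F y) = -z / 2 ∧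
      Q x y =
        Matrix.diagonal
            ![F' x * (F x - F y) * (x - z) / 2, F' y * (F x - F y) * (z - y) / 2]
          + (F' x * F' y) • !![1, -1; -1, 1] := by
  have hFd : Differentiable ℝ F := fun t => (hasDerivAt_F_s7 t).differentiableAt
  have hF'd : Differentiable ℝ F' := fun t => (hasDerivAt_F' t).differentiableAt
  obtain ⟨z, hz, hzeq⟩ := exists_ratio_deriv_eq_ratio_slope F h
    hFd.continuous.continuousOn hFd.differentiableOn F'
    hF'd.continuous.continuousOn hF'd.differentiableOn
  rw [(hasDerivAt_F_s7 z).deriv, (hasDerivAt_F' z).deriv] at hzeq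
  have hpos : 0 < F x - F y := sub_pos.2 (F_strictMono h)
  have hz' : F' x - F' y = (F x - F y) * (-z / 2) := by
    have h2 : (F' x - F' y) * F' z = ((F x - F y) * (-z / 2)) * F' z := by
      linear_combination hzeq
    exact mul_right_cancel₀ (F'_pos z).ne' h2
  refine ⟨z, hz, ?_, ?_⟩
  · rw [div_eq_iff hpos.ne']
    linear_combination hz'
  · ext i j
    rw [Q]
    have hc2 : ((F x - F y) ^ 2) ≠ 0 := pow_ne_zero 2 hpos.ne'
    fin_cases i <;> fin_cases j <;>
      simp [Pxx x y h, Pxy x y h, Pyy x y h, Matrix.diagonal] <;>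
      rw [mul_comm, div_mul_cancel₀ _ hc2] <;>
      first
        | ring1
        | linear_combination F' x * hz'
        | linear_combination (-F' y) * hz'
end

section
/- The function x ↦ -ln F(x) is strictly convex on (0, +∞). -/
open Real

lemma hcont : Continuous (fun s : ℝ => Real.exp (-s ^ 2 / 4)) := by continuity

lemma F_hasDerivAt (x : ℝ) :
    HasDerivAt F ((1 / Real.sqrt Real.pi) * Real.exp (-x ^ 2 / 4)) x := by
  have h : HasDerivAt (fun ξ : ℝ => ∫ s in (0:ℝ)..ξ, Real.exp (-s ^ 2 / 4))
      (Real.exp (-x ^ 2 / 4)) x :=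
    intervalIntegral.integral_hasDerivAt_right (hcont.intervalIntegrable 0 x)
      (hcont.stronglyMeasurableAtFilter _ _) hcont.continuousAt
  exact h.const_mul _

lemma F_pos {x : ℝ} (hx : 0 < x) : 0 < F x := by
  apply mul_pos
  · positivity
  · exact intervalIntegral.intervalIntegral_pos_of_pos_on
      (hcont.intervalIntegrable 0 x) (fun s _ => Real.exp_pos _) hx

noncomputable def g (x : ℝ) : ℝ :=
  -((1 / Real.sqrt Real.pi) * Real.exp (-x ^ 2 / 4) / F x)

lemma inner_hasDerivAt (x : ℝ) :
    HasDerivAt (fun y : ℝ => (1 / Real.sqrt Real.pi) * Real.exp (-y ^ 2 / 4))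
      ((1 / Real.sqrt Real.pi) * (Real.exp (-x ^ 2 / 4) * (-(2 * x ^ 1) / 4))) x := by
  have h1 : HasDerivAt (fun y : ℝ => -y ^ 2 / 4) (-(2 * x ^ 1) / 4) x :=
    ((hasDerivAt_pow 2 x).neg).div_const 4
  exact (h1.exp).const_mul _

lemma negLogF_hasDerivAt {x : ℝ} (hx : 0 < x) :
    HasDerivAt (fun y => -Real.log (F y)) (g x) x := by
  have h := ((F_hasDerivAt x).log (F_pos hx).ne').neg
  exact (by simpa [g] using h : HasDerivAt (-fun y => Real.log (F y)) (g x) x)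

lemma deriv_negLogF_eq {x : ℝ} (hx : 0 < x) :
    deriv (fun y => -Real.log (F y)) x = g x :=
  (negLogF_hasDerivAt hx).deriv

lemma g_hasDerivAt {x : ℝ} (hx : 0 < x) :
    HasDerivAt g
      (-(((1 / Real.sqrt Real.pi) * (Real.exp (-x ^ 2 / 4) * (-(2 * x ^ 1) / 4)) * F x -
          (1 / Real.sqrt Real.pi) * Real.exp (-x ^ 2 / 4) *
            ((1 / Real.sqrt Real.pi) * Real.exp (-x ^ 2 / 4))) / F x ^ 2)) x := by
  exact ((inner_hasDerivAt x).div (F_hasDerivAt x) (F_pos hx).ne').neg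

theorem strictConvexOn_neg_log_F :
    StrictConvexOn ℝ (Set.Ioi (0:ℝ)) (fun x => -Real.log (F x)) := by
  apply strictConvexOn_of_deriv2_pos (convex_Ioi 0)
  · intro x hx
    exact (((F_hasDerivAt x).continuousAt.log (F_pos hx).ne').neg).continuousWithinAt
  · intro x hx
    rw [interior_Ioi] at hx
    have heq : deriv (fun y => -Real.log (F y)) =ᶠ[nhds x] g := by
      filter_upwards [Ioi_mem_nhds hx] with y hy
      exact deriv_negLogF_eq hy
    have h2 : deriv (deriv (fun y => -Real.log (F y))) x = deriv g x := heq.deriv_eq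
    simp only [Function.iterate_succ, Function.iterate_zero, Function.comp_apply, id]
    rw [h2, (g_hasDerivAt hx).deriv]
    have hF := F_pos hx
    have he : (0:ℝ) < Real.exp (-(x ^ 2 / 4)) := Real.exp_pos _
    have hc : (0:ℝ) < 1 / Real.sqrt Real.pi := by positivity
    rw [neg_pos]
    apply div_neg_of_neg_of_pos _ (by positivity)
    have hx' : 0 < x := hx
    have he' : (0:ℝ) < Real.exp (-x ^ 2 / 4) := Real.exp_pos _
    nlinarith [mul_pos hc he', mul_pos (mul_pos (mul_pos hc he') hF) hx',
      mul_pos (mul_pos hc he') (mul_pos hc he')]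
end

section
/- The function x ↦ -ln(1 - F(x)) is strictly convex on all of ℝ. -/
open MeasureTheory Set Real

namespace NegLogF

noncomputable def φ (s : ℝ) : ℝ := Real.exp (-s ^ 2 / 4)

lemma φ_pos (s : ℝ) : 0 < φ s := Real.exp_pos _

lemma φ_cont : Continuous φ := by
  unfold φ; fun_prop

lemma φ_integrable : Integrable φ := by
  have h := integrable_exp_neg_mul_sq (show (0:ℝ) < 1/4 by norm_num)
  refine h.congr (Filter.Eventually.of_forall fun s => ?_)
  unfold φ; ring_nf

lemma φ_hasDerivAt (x : ℝ) : HasDerivAt φ (-x / 2 * φ x) x := by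
  have h1 : HasDerivAt (fun s : ℝ => -s ^ 2 / 4) (-x / 2) x := by
    have := ((hasDerivAt_pow 2 x).neg).div_const 4
    exact this.congr_deriv (by norm_num; ring)
  have := h1.exp
  rw [mul_comm] at this
  exact this

lemma φ_tendsto : Filter.Tendsto φ Filter.atTop (nhds 0) := by
  have h1 : Filter.Tendsto (fun s : ℝ => -s ^ 2 / 4) Filter.atTop Filter.atBot := by
    apply Filter.Tendsto.atBot_div_const (by norm_num)
    exact Filter.tendsto_neg_atBot_iff.mpr (Filter.tendsto_pow_atTop two_ne_zero)
  exact Real.tendsto_exp_atBot.comp h1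

lemma neg_two_φ_tendsto :
    Filter.Tendsto (fun s : ℝ => -2 * φ s) Filter.atTop (nhds 0) := by
  simpa using φ_tendsto.const_mul (-2 : ℝ)

lemma neg_two_φ_hasDerivAt (t : ℝ) :
    HasDerivAt (fun s : ℝ => -2 * φ s) (t * φ t) t := by
  have := (φ_hasDerivAt t).const_mul (-2 : ℝ)
  exact this.congr_deriv (by ring)

lemma sφ_integrableOn {x : ℝ} (hx : 0 < x) :
    IntegrableOn (fun s => s * φ s) (Ioi x) := by
  refine integrableOn_Ioi_deriv_of_nonneg
    ((continuous_const.mul φ_cont).continuousWithinAt)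
    (fun t _ => neg_two_φ_hasDerivAt t)
    (fun t ht => mul_nonneg (le_of_lt (hx.trans ht)) (φ_pos t).le) neg_two_φ_tendsto

lemma integral_Ioi_φ_zero : ∫ s in Ioi (0:ℝ), φ s = Real.sqrt Real.pi := by
  have h := integral_gaussian_Ioi (1/4 : ℝ)
  have h2 : ∫ s in Ioi (0:ℝ), φ s = ∫ x in Ioi (0:ℝ), Real.exp (-(1/4) * x ^ 2) := by
    refine setIntegral_congr_fun (by measurability) fun s _ => ?_
    unfold φ; ring_nf
  rw [h2, h]
  rw [show Real.pi / (1/4 : ℝ) = 4 * Real.pi by ring]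
  rw [show (4 : ℝ) * Real.pi = 2^2 * Real.pi by norm_num,
    Real.sqrt_mul (by positivity), Real.sqrt_sq (by norm_num)]
  ring

lemma split' {f : ℝ → ℝ} {a b : ℝ} (hab : a ≤ b) (hf : IntegrableOn f (Ioi a)) :
    ∫ s in Ioi a, f s = (∫ s in a..b, f s) + ∫ s in Ioi b, f s := by
  rw [intervalIntegral.integral_of_le hab, ← setIntegral_union
    (Ioc_disjoint_Ioi le_rfl) measurableSet_Ioi
    (hf.mono_set (Ioc_subset_Ioi_self))
    (hf.mono_set (Ioi_subset_Ioi hab)),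
    Ioc_union_Ioi_eq_Ioi hab]

lemma split (a b : ℝ) :
    ∫ s in Ioi a, φ s = (∫ s in a..b, φ s) + ∫ s in Ioi b, φ s := by
  rcases le_total a b with h | h
  · exact split' h φ_integrable.integrableOn
  · have := split' h φ_integrable.integrableOn
    rw [intervalIntegral.integral_symm]
    linarith

lemma one_sub_F (x : ℝ) :
    1 - F x = (1 / Real.sqrt Real.pi) * ∫ s in Ioi x, φ s := by
  have hπ : (0:ℝ) < Real.sqrt Real.pi := Real.sqrt_pos.mpr Real.pi_pos
  have h := split 0 x
  rw [integral_Ioi_φ_zero] at h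
  unfold F
  have h3 : (∫ s in (0:ℝ)..x, Real.exp (-s ^ 2 / 4)) = ∫ s in (0:ℝ)..x, φ s := rfl
  rw [h3]
  field_simp
  linarith

lemma tail_pos (x : ℝ) : 0 < ∫ s in Ioi x, φ s := by
  refine (setIntegral_pos_iff_support_of_nonneg_ae ?_ φ_integrable.integrableOn).mpr ?_
  · filter_upwards with s using (φ_pos s).le
  · have hs : Function.support φ = univ := by
      ext s; simp [Function.mem_support, (φ_pos s).ne']
    rw [hs, univ_inter, Real.volume_Ioi]
    simp

lemma one_sub_F_pos (x : ℝ) : 0 < 1 - F x := by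
  rw [one_sub_F]
  have hπ : (0:ℝ) < Real.sqrt Real.pi := Real.sqrt_pos.mpr Real.pi_pos
  exact mul_pos (by positivity) (tail_pos x)

lemma integral_mul_φ {x : ℝ} (hx : 0 < x) : ∫ s in Ioi x, s * φ s = 2 * φ x := by
  have h := integral_Ioi_of_hasDerivAt_of_nonneg
    ((continuous_const.mul φ_cont).continuousWithinAt)
    (fun t (_ : t ∈ Ioi x) => neg_two_φ_hasDerivAt t)
    (fun t ht => mul_nonneg (le_of_lt (hx.trans ht)) (φ_pos t).le) neg_two_φ_tendsto
  rw [h]; simp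

lemma mills {x : ℝ} (hx : 0 < x) :
    x * ∫ s in Ioi x, φ s < 2 * φ x := by
  have hx1 : (0:ℝ) < x + 1 := by linarith
  have hsplit1 : ∫ s in Ioi x, φ s
      = (∫ s in x..(x+1), φ s) + ∫ s in Ioi (x+1), φ s :=
    split' (by linarith) φ_integrable.integrableOn
  have hsplit2 : ∫ s in Ioi x, s * φ s
      = (∫ s in x..(x+1), s * φ s) + ∫ s in Ioi (x+1), s * φ s :=
    split' (by linarith) (sφ_integrableOn hx)
  have hstrict : (∫ s in x..(x+1), x * φ s) < ∫ s in x..(x+1), s * φ s := by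
    refine intervalIntegral.integral_lt_integral_of_continuousOn_of_le_of_exists_lt
      (by linarith) ((continuous_const.mul φ_cont).continuousOn)
      ((continuous_id.mul φ_cont).continuousOn)
      (fun s hs => mul_le_mul_of_nonneg_right hs.1.le (φ_pos s).le)
      ⟨x + 1, ⟨by linarith, le_refl _⟩, by
        have := φ_pos (x + 1); nlinarith⟩
  have hconst : (∫ s in x..(x+1), x * φ s) = x * ∫ s in x..(x+1), φ s := by
    rw [intervalIntegral.integral_const_mul]
  have htail : x * ∫ s in Ioi (x+1), φ s ≤ ∫ s in Ioi (x+1), s * φ s := by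
    rw [← integral_const_mul]
    refine setIntegral_mono_on (φ_integrable.const_mul x).integrableOn
      ((sφ_integrableOn hx).mono_set (Ioi_subset_Ioi (by linarith)))
      measurableSet_Ioi fun s hs => ?_
    exact mul_le_mul_of_nonneg_right (by linarith [hs.out]) (φ_pos s).le
  have hkey : x * ∫ s in Ioi x, φ s < ∫ s in Ioi x, s * φ s := by
    rw [hsplit1, hsplit2, mul_add]
    have := hconst ▸ hstrict
    linarith
  rw [integral_mul_φ hx] at hkey
  exact hkey

noncomputable def c : ℝ := 1 / Real.sqrt Real.pi

lemma c_pos : 0 < c := by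
  have : (0:ℝ) < Real.sqrt Real.pi := Real.sqrt_pos.mpr Real.pi_pos
  unfold c; positivity

lemma F_hasDerivAt (x : ℝ) : HasDerivAt F (c * φ x) x := by
  have h : HasDerivAt (fun u : ℝ => ∫ s in (0:ℝ)..u, φ s) (φ x) x :=
    intervalIntegral.integral_hasDerivAt_right
      φ_integrable.intervalIntegrable
      φ_cont.aestronglyMeasurable.stronglyMeasurableAtFilter
      φ_cont.continuousAt
  exact h.const_mul c

lemma key_ineq (x : ℝ) : x / 2 * (1 - F x) < c * φ x := by
  rcases le_or_gt x 0 with h | h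
  · have h1 : x / 2 * (1 - F x) ≤ 0 :=
      mul_nonpos_iff.mpr (Or.inr ⟨by linarith, (one_sub_F_pos x).le⟩)
    exact lt_of_le_of_lt h1 (mul_pos c_pos (φ_pos x))
  · have hm := mills h
    rw [one_sub_F]
    have hπ : (0:ℝ) < Real.sqrt Real.pi := Real.sqrt_pos.mpr Real.pi_pos
    have : x / 2 * ((1 / Real.sqrt Real.pi) * ∫ s in Ioi x, φ s)
        = (1 / Real.sqrt Real.pi) * (x * ∫ s in Ioi x, φ s) / 2 := by ring
    rw [this]
    unfold c
    rw [div_lt_iff₀ (by norm_num : (0:ℝ) < 2)]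
    have h2 : (1 / Real.sqrt Real.pi) * (x * ∫ s in Ioi x, φ s)
        < (1 / Real.sqrt Real.pi) * (2 * φ x) := by
      exact mul_lt_mul_of_pos_left hm (by positivity)
    calc (1 / Real.sqrt Real.pi) * (x * ∫ s in Ioi x, φ s)
        < (1 / Real.sqrt Real.pi) * (2 * φ x) := h2
      _ = 1 / Real.sqrt Real.pi * φ x * 2 := by ring

noncomputable def g (x : ℝ) : ℝ := c * φ x / (1 - F x)

lemma G_hasDerivAt (x : ℝ) :
    HasDerivAt (fun x : ℝ => -Real.log (1 - F x)) (g x) x := by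
  have h1 : HasDerivAt (fun x : ℝ => 1 - F x) (-(c * φ x)) x := by
    simpa using (F_hasDerivAt x).const_sub 1
  have h2 := (h1.log (one_sub_F_pos x).ne')
  have h3 := h2.neg
  refine h3.congr_deriv ?_
  unfold g; field_simp

lemma g_hasDerivAt (x : ℝ) :
    HasDerivAt g ((c * (-x / 2 * φ x) * (1 - F x) - c * φ x * (-(c * φ x))) /
      (1 - F x) ^ 2) x := by
  have h1 : HasDerivAt (fun x : ℝ => c * φ x) (c * (-x / 2 * φ x)) x :=
    (φ_hasDerivAt x).const_mul c
  have h2 : HasDerivAt (fun x : ℝ => 1 - F x) (-(c * φ x)) x := by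
    simpa using (F_hasDerivAt x).const_sub 1
  exact h1.div h2 (one_sub_F_pos x).ne'

lemma g_deriv_pos (x : ℝ) : 0 < deriv g x := by
  rw [(g_hasDerivAt x).deriv]
  have hnum : 0 < c * (-x / 2 * φ x) * (1 - F x) - c * φ x * (-(c * φ x)) := by
    have h1 : c * (-x / 2 * φ x) * (1 - F x) - c * φ x * (-(c * φ x))
        = c * φ x * (c * φ x - x / 2 * (1 - F x)) := by ring
    rw [h1]
    exact mul_pos (mul_pos c_pos (φ_pos x)) (by linarith [key_ineq x])
  exact div_pos hnum (pow_pos (one_sub_F_pos x) 2)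

end NegLogF

theorem strictConvexOn_neg_log_one_sub_F :
    StrictConvexOn ℝ Set.univ (fun x : ℝ => -Real.log (1 - F x)) := by
  have hGc : Continuous (fun x : ℝ => -Real.log (1 - F x)) := by
    rw [continuous_iff_continuousAt]
    exact fun x => (NegLogF.G_hasDerivAt x).continuousAt
  have hderiv : deriv (fun x : ℝ => -Real.log (1 - F x)) = NegLogF.g :=
    funext fun x => (NegLogF.G_hasDerivAt x).deriv
  have hmono : StrictMono NegLogF.g :=
    strictMono_of_deriv_pos NegLogF.g_deriv_pos
  exact StrictMono.strictConvexOn_univ_of_deriv hGc (hderiv ▸ hmono)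
end
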